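/- Let μ be a probability measure on ℝ^k with full support (μ(U) > 0 for every nonempty open U ⊆ ℝ^k), and let w : ℝ^k → ℝ^b be continuous with each component μ-integrable and ∫ w dμ = 0, such that for every nonzero v ∈ ℝ^b the function x ↦ v·w(x) is not identically zero. Let A : ℝ^k → [1, ∞) be measurable and define G : ℝ^b → (0, +∞] by G(β) = ∫ A(x) exp(β·w(x)) dμ(x). Then: (i) for every t ∈ ℝ the sublevel set {β ∈ ℝ^b : G(β) ≤ t} is compact; and (ii) G is strictly convex on its effective domain, i.e., for all β₁ ≠ β₂ with G(β₁) < ∞ and G(β₂) < ∞ and all t ∈ (0,1), G(tβ₁ + (1−t)β₂) < t·G(β₁) + (1−t)·G(β₂). -/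

import Mathlib

open MeasureTheory


private lemma aux_pos_measure {k : ℕ} (μ : Measure (Fin k → ℝ)) [IsProbabilityMeasure μ]
    (hfull : ∀ U : Set (Fin k → ℝ), IsOpen U → U.Nonempty → 0 < μ U)
    (f : (Fin k → ℝ) → ℝ) (hf : Continuous f) (hfi : Integrable f μ)
    (hf0 : ∫ x, f x ∂μ = 0) (hne : ∃ x, f x ≠ 0) :
    ∃ δ : ℝ, 0 < δ ∧ μ {x | δ < f x} ≠ 0 := by
  have hopen : IsOpen {x | f x ≠ 0} := isOpen_ne.preimage hf
  have hpos : 0 < μ {x | f x ≠ 0} := hfull _ hopen hne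
  have hpos0 : μ {x | 0 < f x} ≠ 0 := by
    intro h0
    have hle : ∀ᵐ x ∂μ, f x ≤ 0 := by
      rw [ae_iff]
      simpa only [not_le] using h0
    have hnonneg : 0 ≤ᵐ[μ] fun x => -f x := hle.mono fun x hx => by simpa using hx
    have hzero : (fun x => -f x) =ᵐ[μ] 0 := by
      rw [← MeasureTheory.integral_eq_zero_iff_of_nonneg_ae hnonneg hfi.neg]
      rw [integral_neg, hf0, neg_zero]
    have : μ {x | f x ≠ 0} = 0 := by
      have h2 : f =ᵐ[μ] 0 := hzero.mono fun x hx => by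
        simpa using (neg_eq_zero).1 (by simpa using hx)
      rw [Filter.EventuallyEq, ae_iff] at h2
      simpa using h2
    exact absurd this hpos.ne'
  by_contra hcon
  push_neg at hcon
  have hall : ∀ n : ℕ, μ {x | (1 : ℝ)/(n+1) < f x} = 0 := fun n =>
    hcon _ (by positivity)
  have hsub : {x | 0 < f x} ⊆ ⋃ n : ℕ, {x | (1 : ℝ)/(n+1) < f x} := by
    intro x hx
    obtain ⟨n, hn⟩ := exists_nat_gt (1 / f x)
    refine Set.mem_iUnion.2 ⟨n, ?_⟩
    have hfx : (0:ℝ) < f x := hx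
    have h1 : 1 / f x < n + 1 := hn.trans_le (by linarith)
    rw [div_lt_iff₀ hfx] at h1
    rw [Set.mem_setOf_eq, div_lt_iff₀ (by positivity)]
    linarith
  exact hpos0 (measure_mono_null hsub (measure_iUnion_null hall))

/-- **Compact sublevel sets and strict convexity of the tilted moment-generating function**
(Lemma on the `β`-objective).  Let `μ` be a probability measure on `ℝ^k` with full support,
`w : ℝ^k → ℝ^b` continuous with integrable components, mean zero, and such that `v·w` is
not identically zero for `v ≠ 0`; let `A ≥ 1` be measurable and
`G(β) = ∫ A(x) exp(β·w(x)) dμ(x) ∈ (0, +∞]`.  Then every sublevel set of `G` is compact,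
and `G` is strictly convex on its effective domain. -/
theorem tilted_mgf_sublevel_compact_and_strictly_convex
    (k b : ℕ) (μ : Measure (Fin k → ℝ)) [IsProbabilityMeasure μ]
    (hfull : ∀ U : Set (Fin k → ℝ), IsOpen U → U.Nonempty → 0 < μ U)
    (w : (Fin k → ℝ) → Fin b → ℝ) (hwcont : Continuous w)
    (hwint : ∀ j, Integrable (fun x => w x j) μ)
    (hw0 : ∀ j, ∫ x, w x j ∂μ = 0)
    (hwnz : ∀ v : Fin b → ℝ, v ≠ 0 → ∃ x, ∑ j, v j * w x j ≠ 0)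
    (A : (Fin k → ℝ) → ℝ) (hAmeas : Measurable A) (hA1 : ∀ x, 1 ≤ A x)
    (G : (Fin b → ℝ) → ENNReal)
    (hG : ∀ β, G β = ∫⁻ x, ENNReal.ofReal (A x * Real.exp (∑ j, β j * w x j)) ∂μ) :
    (∀ t : ℝ, IsCompact {β : Fin b → ℝ | G β ≤ ENNReal.ofReal t}) ∧
    (∀ β₁ β₂ : Fin b → ℝ, β₁ ≠ β₂ → G β₁ < ⊤ → G β₂ < ⊤ →
      ∀ t : ℝ, 0 < t → t < 1 →
        G (t • β₁ + (1 - t) • β₂)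
          < ENNReal.ofReal t * G β₁ + ENNReal.ofReal (1 - t) * G β₂) := by
  have hipc : ∀ v : Fin b → ℝ, Continuous fun x => ∑ j, v j * w x j := fun v =>
    continuous_finset_sum _ fun j _ => continuous_const.mul ((continuous_apply j).comp hwcont)
  have hipcv : ∀ x, Continuous fun v : Fin b → ℝ => ∑ j, v j * w x j := fun x =>
    continuous_finset_sum _ fun j _ => (continuous_apply j).mul continuous_const
  have hmF : ∀ v : Fin b → ℝ,
      Measurable fun x => ENNReal.ofReal (A x * Real.exp (∑ j, v j * w x j)) := fun v =>
    (hAmeas.mul (Real.continuous_exp.comp (hipc v)).measurable).ennreal_ofReal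
  constructor
  · -- compact sublevel sets
    intro T
    set S := {β : Fin b → ℝ | G β ≤ ENNReal.ofReal T} with hS
    -- lower bound lemma
    have hlow : ∀ (β : Fin b → ℝ) (c : ℝ) (B : Set (Fin k → ℝ)), MeasurableSet B →
        (∀ x ∈ B, c ≤ ∑ j, β j * w x j) →
        ENNReal.ofReal (Real.exp c) * μ B ≤ G β := by
      intro β c B hBm hBc
      rw [hG]
      calc ENNReal.ofReal (Real.exp c) * μ B
          = ∫⁻ _ in B, ENNReal.ofReal (Real.exp c) ∂μ := (setLIntegral_const B _).symm
        _ ≤ ∫⁻ x in B, ENNReal.ofReal (A x * Real.exp (∑ j, β j * w x j)) ∂μ := by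
            refine setLIntegral_mono (hmF β) fun x hx => ENNReal.ofReal_le_ofReal ?_
            have h1 := hA1 x
            have h2 := Real.exp_le_exp.2 (hBc x hx)
            nlinarith [Real.exp_pos c, Real.exp_pos (∑ j, β j * w x j)]
        _ ≤ _ := setLIntegral_le_lintegral _ _
    have hclosed : IsClosed S := by
      refine IsSeqClosed.isClosed ?_
      intro βn β hβn hlim
      have key : ∀ x, Filter.Tendsto
          (fun n => ENNReal.ofReal (A x * Real.exp (∑ j, βn n j * w x j))) Filter.atTop
          (nhds (ENNReal.ofReal (A x * Real.exp (∑ j, β j * w x j)))) := by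
        intro x
        have hc : Continuous fun v : Fin b → ℝ =>
            ENNReal.ofReal (A x * Real.exp (∑ j, v j * w x j)) :=
          ENNReal.continuous_ofReal.comp (continuous_const.mul (Real.continuous_exp.comp (hipcv x)))
        exact (hc.tendsto β).comp hlim
      have : G β ≤ ENNReal.ofReal T := by
        calc G β = ∫⁻ x, ENNReal.ofReal (A x * Real.exp (∑ j, β j * w x j)) ∂μ := hG β
          _ = ∫⁻ x, Filter.liminf
                (fun n => ENNReal.ofReal (A x * Real.exp (∑ j, βn n j * w x j)))
                Filter.atTop ∂μ := lintegral_congr fun x => ((key x).liminf_eq).symm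
          _ ≤ Filter.liminf
                (fun n => ∫⁻ x, ENNReal.ofReal (A x * Real.exp (∑ j, βn n j * w x j)) ∂μ)
                Filter.atTop := lintegral_liminf_le fun n => hmF (βn n)
          _ = Filter.liminf (fun n => G (βn n)) Filter.atTop := by simp_rw [← hG]
          _ ≤ Filter.liminf (fun _ : ℕ => ENNReal.ofReal T) Filter.atTop :=
              Filter.liminf_le_liminf (Filter.Eventually.of_forall fun n => hβn n)
          _ = ENNReal.ofReal T := Filter.liminf_const _
      exact this
    have hbdd : Bornology.IsBounded S := by
      by_contra hbd
      rw [isBounded_iff_forall_norm_le] at hbd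
      push_neg at hbd
      choose β hβS hβn using fun n : ℕ => hbd n
      have hβ0 : ∀ n, β n ≠ 0 := by
        intro n h
        have := hβn n
        rw [h, norm_zero] at this
        exact (Nat.cast_nonneg n).not_gt this
      set u : ℕ → (Fin b → ℝ) := fun n => (‖β n‖)⁻¹ • β n with hu
      have hus : ∀ n, u n ∈ Metric.sphere (0 : Fin b → ℝ) 1 := by
        intro n
        rw [mem_sphere_zero_iff_norm, hu, norm_smul, norm_inv, norm_norm,
          inv_mul_cancel₀ (norm_ne_zero_iff.2 (hβ0 n))]
      obtain ⟨v, hv, φ, hφ, hvlim⟩ := (isCompact_sphere (0 : Fin b → ℝ) 1).tendsto_subseq hus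
      rw [mem_sphere_zero_iff_norm] at hv
      have hv0 : v ≠ 0 := fun h => by simp [h] at hv
      -- apply aux_pos_measure
      obtain ⟨δ, hδ, hμδ⟩ := aux_pos_measure μ hfull (fun x => ∑ j, v j * w x j) (hipc v)
        (integrable_finset_sum _ fun j _ => (hwint j).const_mul (v j))
        (by rw [integral_finset_sum _ fun j _ => (hwint j).const_mul (v j)]
            simp [integral_const_mul, hw0])
        (hwnz v hv0)
      -- choose M
      have hM : ∃ M : ℕ, μ ({x | δ < ∑ j, v j * w x j} ∩ {x | ‖w x‖ ≤ (M : ℝ)}) ≠ 0 := by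
        by_contra hMc
        push_neg at hMc
        apply hμδ
        refine measure_mono_null ?_ (measure_iUnion_null hMc)
        intro x hx
        obtain ⟨M, hM⟩ := exists_nat_ge ‖w x‖
        exact Set.mem_iUnion.2 ⟨M, hx, hM⟩
      obtain ⟨M, hMμ⟩ := hM
      set B := {x | δ < ∑ j, v j * w x j} ∩ {x | ‖w x‖ ≤ (M : ℝ)} with hB
      have hBm : MeasurableSet B :=
        ((isOpen_lt continuous_const (hipc v)).measurableSet).inter
          (isClosed_le (continuous_norm.comp hwcont) continuous_const).measurableSet
      -- error estimate
      have hest : ∀ (u' : Fin b → ℝ), ∀ x ∈ B,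
          |∑ j, (u' j - v j) * w x j| ≤ (b * M : ℝ) * ‖u' - v‖ := by
        intro u' x hx
        calc |∑ j, (u' j - v j) * w x j| ≤ ∑ j, |(u' j - v j) * w x j| :=
              Finset.abs_sum_le_sum_abs _ _
          _ ≤ ∑ _j : Fin b, ‖u' - v‖ * (M : ℝ) := by
              refine Finset.sum_le_sum fun j _ => ?_
              rw [abs_mul]
              have h1 : |u' j - v j| ≤ ‖u' - v‖ := by
                simpa [Real.norm_eq_abs] using norm_le_pi_norm (u' - v) j
              have h2 : |w x j| ≤ (M : ℝ) :=
                le_trans (by simpa [Real.norm_eq_abs] using norm_le_pi_norm (w x) j) hx.2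
              exact mul_le_mul h1 h2 (abs_nonneg _) (norm_nonneg _)
          _ = (b * M : ℝ) * ‖u' - v‖ := by
              rw [Finset.sum_const, Finset.card_univ, Fintype.card_fin, nsmul_eq_mul]
              ring
      -- eventually the direction is close
      set ε : ℝ := δ / (2 * (b * M + 1)) with hε
      have hεpos : 0 < ε := by positivity
      obtain ⟨N₀, hN₀⟩ := (Metric.tendsto_atTop.1 hvlim) ε hεpos
      -- key: for n ≥ N₀ and x ∈ B, δ/2 ≤ ∑ j, u (φ n) j * w x j
      have hkey : ∀ n, N₀ ≤ n → ∀ x ∈ B, δ / 2 ≤ ∑ j, u (φ n) j * w x j := by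
        intro n hn x hx
        have hd := hN₀ n hn
        rw [Function.comp_apply, dist_eq_norm] at hd
        have h1 : |∑ j, (u (φ n) j - v j) * w x j| ≤ (b * M : ℝ) * ‖u (φ n) - v‖ :=
          hest _ x hx
        have h2 : (b * M : ℝ) * ‖u (φ n) - v‖ ≤ (b * M + 1) * ε := by
          have hnn : (0:ℝ) ≤ b * M := by positivity
          have := mul_le_mul_of_nonneg_left hd.le hnn
          nlinarith [norm_nonneg (u (φ n) - v)]
        have h3 : (b * M + 1 : ℝ) * ε = δ / 2 := by
          rw [hε]; field_simp
        have h4 : ∑ j, u (φ n) j * w x j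
            = ∑ j, v j * w x j + ∑ j, (u (φ n) j - v j) * w x j := by
          rw [← Finset.sum_add_distrib]
          exact Finset.sum_congr rfl fun j _ => by ring
        have h5 : δ < ∑ j, v j * w x j := hx.1
        rw [h4]
        have := abs_le.1 h1
        linarith
      -- derive contradiction
      have hm0 : μ B ≠ 0 := hMμ
      have hmtop : μ B ≠ ⊤ := measure_ne_top μ B
      set m : ℝ := (μ B).toReal with hmdef
      have hmpos : 0 < m := ENNReal.toReal_pos hm0 hmtop
      obtain ⟨n₁, hn₁⟩ := exists_nat_gt (max (N₀ : ℝ) (T / m / (δ / 2)))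
      set n := n₁
      have hnN₀ : N₀ ≤ n := by
        have := (le_max_left (N₀:ℝ) _).trans hn₁.le
        exact_mod_cast this
      have hβeq : β (φ n) = ‖β (φ n)‖ • u (φ n) := by
        rw [hu, smul_smul, mul_inv_cancel₀ (norm_ne_zero_iff.2 (hβ0 _)), one_smul]
      have hiplow : ∀ x ∈ B, ‖β (φ n)‖ * (δ / 2) ≤ ∑ j, β (φ n) j * w x j := by
        intro x hx
        have h6 : ∑ j, β (φ n) j * w x j = ‖β (φ n)‖ * ∑ j, u (φ n) j * w x j := by
          rw [Finset.mul_sum]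
          refine Finset.sum_congr rfl fun j _ => ?_
          conv_lhs => rw [hβeq]
          rw [Pi.smul_apply, smul_eq_mul, mul_assoc]
        rw [h6]
        exact mul_le_mul_of_nonneg_left (hkey n hnN₀ x hx) (norm_nonneg _)
      have hGlow := hlow (β (φ n)) (‖β (φ n)‖ * (δ / 2)) B hBm hiplow
      have hGup : G (β (φ n)) ≤ ENNReal.ofReal T := hβS (φ n)
      have hcomb : ENNReal.ofReal (Real.exp (‖β (φ n)‖ * (δ / 2)) * m) ≤ ENNReal.ofReal T := by
        rw [ENNReal.ofReal_mul (Real.exp_pos _).le, hmdef, ENNReal.ofReal_toReal hmtop]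
        exact hGlow.trans hGup
      have hcgt : T < Real.exp (‖β (φ n)‖ * (δ / 2)) * m := by
        have hbig : (n : ℝ) * (δ / 2) ≤ Real.exp (‖β (φ n)‖ * (δ / 2)) := by
          have h7 : (n : ℝ) ≤ φ n := by exact_mod_cast hφ.le_apply
          have h8 : (φ n : ℝ) < ‖β (φ n)‖ := hβn (φ n)
          have h9 : (n : ℝ) * (δ / 2) ≤ ‖β (φ n)‖ * (δ / 2) := by nlinarith
          have h10 := Real.add_one_le_exp (‖β (φ n)‖ * (δ / 2))
          linarith
        have h11 : T / m / (δ / 2) < n := (le_max_right _ _).trans_lt hn₁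
        have h12 : T < (n : ℝ) * (δ / 2) * m := by
          rw [div_lt_iff₀ (by positivity), div_lt_iff₀ hmpos] at h11
          linarith
        nlinarith
      rcases (ENNReal.ofReal_le_ofReal_iff'.1 hcomb) with h | h
      · linarith
      · nlinarith [Real.exp_pos (‖β (φ n)‖ * (δ / 2))]
    exact Metric.isCompact_of_isClosed_isBounded hclosed hbdd
  · -- strict convexity
    intro β₁ β₂ hne h1 h2 t ht ht1
    have h1t : (0:ℝ) < 1 - t := by linarith
    set F : (Fin b → ℝ) → (Fin k → ℝ) → ENNReal :=
      fun v x => ENNReal.ofReal (A x * Real.exp (∑ j, v j * w x j)) with hF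
    set g : (Fin k → ℝ) → ENNReal :=
      fun x => ENNReal.ofReal t * F β₁ x + ENNReal.ofReal (1 - t) * F β₂ x with hg'
    have hgmeas : Measurable g := ((hmF β₁).const_mul _).add ((hmF β₂).const_mul _)
    have hipsum : ∀ x, ∑ j, (t • β₁ + (1 - t) • β₂) j * w x j
        = t * ∑ j, β₁ j * w x j + (1 - t) * ∑ j, β₂ j * w x j := by
      intro x
      rw [Finset.mul_sum, Finset.mul_sum, ← Finset.sum_add_distrib]
      exact Finset.sum_congr rfl fun j _ => by
        simp [Pi.add_apply, Pi.smul_apply, smul_eq_mul]; ring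
    have hA0 : ∀ x, (0:ℝ) < A x := fun x => lt_of_lt_of_le one_pos (hA1 x)
    have hgval : ∀ x, g x = ENNReal.ofReal
        (t * (A x * Real.exp (∑ j, β₁ j * w x j))
          + (1 - t) * (A x * Real.exp (∑ j, β₂ j * w x j))) := by
      intro x
      rw [hg', ENNReal.ofReal_add
        (mul_nonneg ht.le (mul_nonneg (hA0 x).le (Real.exp_pos _).le))
        (mul_nonneg h1t.le (mul_nonneg (hA0 x).le (Real.exp_pos _).le)),
        ENNReal.ofReal_mul ht.le, ENNReal.ofReal_mul h1t.le]
    have hfg : ∀ x, F (t • β₁ + (1 - t) • β₂) x ≤ g x := by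
      intro x
      rw [hgval x, hF]
      refine ENNReal.ofReal_le_ofReal ?_
      rw [hipsum]
      have hc := convexOn_exp.2 (Set.mem_univ (∑ j, β₁ j * w x j))
        (Set.mem_univ (∑ j, β₂ j * w x j)) ht.le h1t.le (by ring)
      simp only [smul_eq_mul] at hc
      nlinarith [mul_le_mul_of_nonneg_left hc (hA0 x).le]
    -- strict inequality on a set of positive measure
    set s : Set (Fin k → ℝ) := {x | ∑ j, β₁ j * w x j ≠ ∑ j, β₂ j * w x j} with hs
    have hsopen : IsOpen s := isOpen_ne_fun (hipc β₁) (hipc β₂)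
    have hsne : s.Nonempty := by
      obtain ⟨x, hx⟩ := hwnz (β₁ - β₂) (sub_ne_zero.2 hne)
      refine ⟨x, fun hXX => hx ?_⟩
      have : ∑ j, (β₁ - β₂) j * w x j = ∑ j, β₁ j * w x j - ∑ j, β₂ j * w x j := by
        rw [← Finset.sum_sub_distrib]
        exact Finset.sum_congr rfl fun j _ => by simp [Pi.sub_apply]; ring
      rw [this, hXX, sub_self]
    have hμs : μ s ≠ 0 := (hfull s hsopen hsne).ne'
    have hstrict : ∀ x ∈ s, F (t • β₁ + (1 - t) • β₂) x < g x := by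
      intro x hx
      rw [hgval x, hF]
      have hpos : (0:ℝ) < t * (A x * Real.exp (∑ j, β₁ j * w x j))
          + (1 - t) * (A x * Real.exp (∑ j, β₂ j * w x j)) := by
        have hp1 := mul_pos ht (mul_pos (hA0 x) (Real.exp_pos (∑ j, β₁ j * w x j)))
        have hp2 := mul_pos h1t (mul_pos (hA0 x) (Real.exp_pos (∑ j, β₂ j * w x j)))
        linarith
      rw [ENNReal.ofReal_lt_ofReal_iff hpos]
      rw [hipsum]
      have hc := strictConvexOn_exp.2 (Set.mem_univ (∑ j, β₁ j * w x j))
        (Set.mem_univ (∑ j, β₂ j * w x j)) hx ht h1t (by ring)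
      simp only [smul_eq_mul] at hc
      nlinarith [mul_lt_mul_of_pos_left hc (hA0 x)]
    -- integral of g
    have hgint : ∫⁻ x, g x ∂μ = ENNReal.ofReal t * G β₁ + ENNReal.ofReal (1 - t) * G β₂ := by
      rw [hg']
      rw [lintegral_add_left ((hmF β₁).const_mul _), lintegral_const_mul _ (hmF β₁),
        lintegral_const_mul _ (hmF β₂), ← hG, ← hG]
    have hgfin : ∫⁻ x, g x ∂μ ≠ ⊤ := by
      rw [hgint]
      exact ENNReal.add_ne_top.2
        ⟨ENNReal.mul_ne_top ENNReal.ofReal_ne_top h1.ne,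
         ENNReal.mul_ne_top ENNReal.ofReal_ne_top h2.ne⟩
    have hffin : ∫⁻ x, F (t • β₁ + (1 - t) • β₂) x ∂μ ≠ ⊤ :=
      fun h => hgfin (top_le_iff.1 (h ▸ lintegral_mono hfg))
    have hmain := lintegral_strict_mono_of_ae_le_of_ae_lt_on (μ := μ)
      hgmeas.aemeasurable hffin (Filter.Eventually.of_forall hfg) hμs
      (Filter.Eventually.of_forall hstrict)
    calc G (t • β₁ + (1 - t) • β₂) = ∫⁻ x, F (t • β₁ + (1 - t) • β₂) x ∂μ := hG _
      _ < ∫⁻ x, g x ∂μ := hmain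
      _ = ENNReal.ofReal t * G β₁ + ENNReal.ofReal (1 - t) * G β₂ := hgint
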